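/- (No stationary phase relations between inequivalent invertible parts.) Let h be an invertible n×n complex matrix and let P be an orthogonal projection with 0 ≠ P ≠ 𝟙 and Ph = hP. Assume that the only orthogonal projections commuting with h are 0, P, 𝟙−P and 𝟙 (i.e. the two diagonal parts of h are indecomposable and not unitarily equivalent). Then every density matrix ρ with D_h(ρ) = 0 satisfies P ρ (𝟙−P) = 0: there are no stationary phase relations between the two subspaces. -/

import Mathlib

open Matrix
open scoped ComplexOrder

/-- The simple Lindblad generator `D_h`. -/
noncomputable def lindblad {n : ℕ} (h ρ : Matrix (Fin n) (Fin n) ℂ) :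
    Matrix (Fin n) (Fin n) ℂ :=
  h * ρ * hᴴ - (1 / 2 : ℂ) • (hᴴ * h * ρ + ρ * (hᴴ * h))

section Aux

variable {n : ℕ}

open scoped MatrixOrder in
lemma psd_sqrt_exists (A : Matrix (Fin n) (Fin n) ℂ) (hA : A.PosSemidef) :
    ∃ r : Matrix (Fin n) (Fin n) ℂ, rᴴ = r ∧ r * r = A :=
  ⟨CFC.sqrt A, (CFC.sqrt_nonneg A).posSemidef.1, CFC.sqrt_mul_sqrt_self A hA.nonneg⟩

lemma lindblad_add (h A B : Matrix (Fin n) (Fin n) ℂ) :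
    lindblad h (A + B) = lindblad h A + lindblad h B := by
  simp only [lindblad, Matrix.mul_add, Matrix.add_mul, smul_add]
  abel

lemma lindblad_smul (h A : Matrix (Fin n) (Fin n) ℂ) (c : ℂ) :
    lindblad h (c • A) = c • lindblad h A := by
  simp only [lindblad, Matrix.mul_smul, Matrix.smul_mul, smul_sub, smul_add, smul_smul]
  rw [mul_comm]

lemma lindblad_sandwich (h E F A : Matrix (Fin n) (Fin n) ℂ)
    (hE : h * E = E * h) (hE' : hᴴ * E = E * hᴴ)
    (hF : h * F = F * h) (hF' : hᴴ * F = F * hᴴ) :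
    lindblad h (E * A * F) = E * lindblad h A * F := by
  have l1 : h * (E * A * F) * hᴴ = E * (h * A * hᴴ) * F := by
    calc h * (E * A * F) * hᴴ = (h * E) * A * (F * hᴴ) := by
          simp only [Matrix.mul_assoc]
      _ = (E * h) * A * (hᴴ * F) := by rw [hE, hF']
      _ = E * (h * A * hᴴ) * F := by simp only [Matrix.mul_assoc]
  have hKE : (hᴴ * h) * E = E * (hᴴ * h) := by
    calc (hᴴ * h) * E = hᴴ * (h * E) := by rw [Matrix.mul_assoc]
      _ = hᴴ * E * h := by rw [hE, Matrix.mul_assoc]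
      _ = E * (hᴴ * h) := by rw [hE', Matrix.mul_assoc]
  have hKF : (hᴴ * h) * F = F * (hᴴ * h) := by
    calc (hᴴ * h) * F = hᴴ * (h * F) := by rw [Matrix.mul_assoc]
      _ = hᴴ * F * h := by rw [hF, Matrix.mul_assoc]
      _ = F * (hᴴ * h) := by rw [hF', Matrix.mul_assoc]
  have l2 : (hᴴ * h) * (E * A * F) = E * ((hᴴ * h) * A) * F := by
    calc (hᴴ * h) * (E * A * F) = ((hᴴ * h) * E) * A * F := by simp only [Matrix.mul_assoc]
      _ = E * ((hᴴ * h) * A) * F := by rw [hKE]; simp only [Matrix.mul_assoc]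
  have l3 : (E * A * F) * (hᴴ * h) = E * (A * (hᴴ * h)) * F := by
    calc (E * A * F) * (hᴴ * h) = E * A * (F * (hᴴ * h)) := by simp only [Matrix.mul_assoc]
      _ = E * A * ((hᴴ * h) * F) := by rw [hKF]
      _ = E * (A * (hᴴ * h)) * F := by simp only [Matrix.mul_assoc, hKF]
  simp only [lindblad, l1, l2, l3, Matrix.mul_add, Matrix.add_mul, Matrix.mul_sub,
    Matrix.sub_mul, Matrix.smul_mul, Matrix.mul_smul]

lemma herm_form_real (A : Matrix (Fin n) (Fin n) ℂ) (hA : A.IsHermitian)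
    (x : Fin n → ℂ) : star (star x ⬝ᵥ A *ᵥ x) = star x ⬝ᵥ A *ᵥ x := by
  calc star (star x ⬝ᵥ A *ᵥ x) = star (A *ᵥ x) ⬝ᵥ star (star x) :=
        (star_dotProduct_star _ _).symm
    _ = (star x ᵥ* Aᴴ) ⬝ᵥ x := by rw [star_mulVec, star_star]
    _ = star x ⬝ᵥ (Aᴴ *ᵥ x) := (dotProduct_mulVec _ _ _).symm
    _ = star x ⬝ᵥ A *ᵥ x := by rw [hA.eq]

lemma trace_ctm_self_zero (A : Matrix (Fin n) (Fin n) ℂ) (h0 : (Aᴴ * A).trace = 0) :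
    A = 0 := by
  have key : ∀ j i, star (A i j) * A i j = 0 := by
    have h1 : ∀ j ∈ Finset.univ, (0:ℂ) ≤ ∑ i, star (A i j) * A i j := by
      intro j _
      exact Finset.sum_nonneg fun i _ => star_mul_self_nonneg _
    have h2 : ∑ j, ∑ i, star (A i j) * A i j = 0 := by
      rw [← h0]
      simp [Matrix.trace, Matrix.mul_apply, Matrix.diag, conjTranspose_apply]
    rw [Finset.sum_eq_zero_iff_of_nonneg h1] at h2
    intro j i
    have h3 := h2 j (Finset.mem_univ j)
    have h4 : ∀ i ∈ Finset.univ, (0:ℂ) ≤ star (A i j) * A i j :=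
      fun i _ => star_mul_self_nonneg _
    rw [Finset.sum_eq_zero_iff_of_nonneg h4] at h3
    exact h3 i (Finset.mem_univ i)
  ext i j
  have := key j i
  simpa using this

lemma psd_trace_zero (A : Matrix (Fin n) (Fin n) ℂ) (hA : A.PosSemidef)
    (h0 : A.trace = 0) : A = 0 := by
  obtain ⟨r, hrherm, hrr⟩ : ∃ r : Matrix (Fin n) (Fin n) ℂ, rᴴ = r ∧ r * r = A :=
    psd_sqrt_exists _ hA
  have h1 : (rᴴ * r).trace = 0 := by rw [hrherm, hrr, h0]
  have h2 : r = 0 := trace_ctm_self_zero r h1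
  rw [← hrr, h2, Matrix.mul_zero]

lemma compress_zero (ρ E : Matrix (Fin n) (Fin n) ℂ) (hρ : ρ.PosSemidef)
    (hE : Eᴴ = E) (h0 : E * ρ * E = 0) : ρ * E = 0 := by
  obtain ⟨r, hrherm, hrr⟩ : ∃ r : Matrix (Fin n) (Fin n) ℂ, rᴴ = r ∧ r * r = ρ :=
    psd_sqrt_exists _ hρ
  have h1 : (r * E)ᴴ * (r * E) = 0 := by
    rw [conjTranspose_mul, hrherm, hE]
    calc E * r * (r * E) = E * (r * r) * E := by simp only [Matrix.mul_assoc]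
      _ = 0 := by rw [hrr, h0]
  have h2 : r * E = 0 := by rwa [Matrix.conjTranspose_mul_self_eq_zero] at h1
  calc ρ * E = r * (r * E) := by rw [← hrr, Matrix.mul_assoc]
    _ = 0 := by rw [h2, Matrix.mul_zero]

lemma exists_supp_proj (σ : Matrix (Fin n) (Fin n) ℂ) (hσ : σ.IsHermitian) :
    ∃ S : Matrix (Fin n) (Fin n) ℂ, S = Sᴴ ∧ S * S = S ∧ σ * S = σ ∧ S * σ = σ ∧
      (S = 1 → IsUnit σ) ∧ (∀ B : Matrix (Fin n) (Fin n) ℂ, B * σ = 0 → B * S = 0) := by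
  classical
  set U : Matrix (Fin n) (Fin n) ℂ := (hσ.eigenvectorUnitary : Matrix (Fin n) (Fin n) ℂ) with hU
  have hUU : U * Uᴴ = 1 := by
    rw [← Matrix.star_eq_conjTranspose]
    exact Matrix.mem_unitaryGroup_iff.mp hσ.eigenvectorUnitary.2
  have hUU' : Uᴴ * U = 1 := by
    rw [← Matrix.star_eq_conjTranspose]
    exact Matrix.mem_unitaryGroup_iff'.mp hσ.eigenvectorUnitary.2
  set e : Fin n → ℂ := fun i => (hσ.eigenvalues i : ℂ) with he
  have hspec : σ = U * Matrix.diagonal e * Uᴴ := by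
    rw [← Matrix.star_eq_conjTranspose]
    exact hσ.spectral_theorem
  set d : Fin n → ℂ := fun i => if hσ.eigenvalues i = 0 then 0 else 1 with hd
  set g : Fin n → ℂ := fun i => if hσ.eigenvalues i = 0 then 0 else (e i)⁻¹ with hg
  have key : ∀ a b : Fin n → ℂ,
      (U * Matrix.diagonal a * Uᴴ) * (U * Matrix.diagonal b * Uᴴ)
        = U * Matrix.diagonal (a * b) * Uᴴ := by
    intro a b
    calc (U * Matrix.diagonal a * Uᴴ) * (U * Matrix.diagonal b * Uᴴ)
        = U * Matrix.diagonal a * (Uᴴ * U) * Matrix.diagonal b * Uᴴ := by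
          simp only [Matrix.mul_assoc]
      _ = U * (Matrix.diagonal a * Matrix.diagonal b) * Uᴴ := by
          rw [hUU']; simp only [Matrix.mul_one, Matrix.mul_assoc]
      _ = U * Matrix.diagonal (a * b) * Uᴴ := by rw [Matrix.diagonal_mul_diagonal]; rfl
  have hed : e * d = e := by
    funext i
    simp only [Pi.mul_apply, hd, he]
    split
    · next h0 => simp [h0]
    · simp
  have heg : e * g = d := by
    funext i
    simp only [Pi.mul_apply, hd, hg, he]
    split
    · simp
    · next h0 =>
      rw [mul_inv_cancel₀]
      exact_mod_cast h0
  have hdd : d * d = d := by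
    funext i
    simp only [Pi.mul_apply, hd]
    split <;> simp
  refine ⟨U * Matrix.diagonal d * Uᴴ, ?_, ?_, ?_, ?_, ?_, ?_⟩
  · have hsd : star d = d := by
      funext i
      simp only [Pi.star_apply, hd]
      split <;> simp
    have hds : (Matrix.diagonal d)ᴴ = Matrix.diagonal d := by
      rw [Matrix.diagonal_conjTranspose, hsd]
    rw [conjTranspose_mul, conjTranspose_mul, conjTranspose_conjTranspose, hds,
      Matrix.mul_assoc]
  · rw [key, hdd]
  · rw [hspec, key, hed]
  · rw [hspec, key]
    have : d * e = e := by rw [mul_comm, hed]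
    rw [this]
  · intro hS1
    have h1 : σ * (U * Matrix.diagonal g * Uᴴ) = 1 := by
      rw [hspec, key, heg]; exact hS1
    have hdet : σ.det * (U * Matrix.diagonal g * Uᴴ).det = 1 := by
      rw [← Matrix.det_mul, h1, Matrix.det_one]
    exact (Matrix.isUnit_iff_isUnit_det σ).mpr (IsUnit.of_mul_eq_one _ hdet)
  · intro B hB
    have : (U * Matrix.diagonal d * Uᴴ) = σ * (U * Matrix.diagonal g * Uᴴ) := by
      rw [hspec, key, heg]
    rw [this, ← Matrix.mul_assoc, hB, Matrix.zero_mul]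

lemma exists_support (h σ : Matrix (Fin n) (Fin n) ℂ) (hinv : IsUnit h)
    (hσ : σ.PosSemidef) (hstat : lindblad h σ = 0) :
    ∃ S : Matrix (Fin n) (Fin n) ℂ, S = Sᴴ ∧ S * S = S ∧ S * h = h * S ∧
      σ * S = σ ∧ S * σ = σ ∧ (S = 1 → IsUnit σ) := by
  obtain ⟨S, hS1, hS2, hσS, hSσ, hSone, hsupp⟩ := exists_supp_proj σ hσ.1
  have hst : h * σ * hᴴ = (1 / 2 : ℂ) • (hᴴ * h * σ + σ * (hᴴ * h)) :=
    sub_eq_zero.mp hstat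
  set T : Matrix (Fin n) (Fin n) ℂ := 1 - S with hT
  have hσT : σ * T = 0 := by rw [hT, Matrix.mul_sub, Matrix.mul_one, hσS, sub_self]
  have hTσ : T * σ = 0 := by rw [hT, Matrix.sub_mul, Matrix.one_mul, hSσ, sub_self]
  have stepA : T * h * σ = 0 := by
    have hA : T * (h * σ * hᴴ) * T = 0 := by
      rw [hst]
      rw [Matrix.mul_smul, Matrix.smul_mul, Matrix.mul_add, Matrix.add_mul]
      have e1 : T * (hᴴ * h * σ) * T = 0 := by
        calc T * (hᴴ * h * σ) * T = T * (hᴴ * h) * (σ * T) := by simp only [Matrix.mul_assoc]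
          _ = 0 := by rw [hσT, Matrix.mul_zero]
      have e2 : T * (σ * (hᴴ * h)) * T = 0 := by
        calc T * (σ * (hᴴ * h)) * T = (T * σ) * ((hᴴ * h) * T) := by simp only [Matrix.mul_assoc]
          _ = 0 := by rw [hTσ, Matrix.zero_mul]
      rw [e1, e2, add_zero, smul_zero]
    obtain ⟨r, hrherm, hrr⟩ : ∃ r : Matrix (Fin n) (Fin n) ℂ, rᴴ = r ∧ r * r = σ :=
      psd_sqrt_exists _ hσ
    have hX : (T * h * r) * (T * h * r)ᴴ = 0 := by
      rw [conjTranspose_mul, conjTranspose_mul, hrherm]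
      calc T * h * r * (r * (hᴴ * Tᴴ)) = T * (h * (r * r) * hᴴ) * Tᴴ := by
            simp only [Matrix.mul_assoc]
        _ = T * (h * σ * hᴴ) * T := by
            rw [hrr]
            have : Tᴴ = T := by
              rw [hT, conjTranspose_sub, conjTranspose_one, ← hS1]
            rw [this]
        _ = 0 := hA
    have hX0 : T * h * r = 0 := by
      rwa [Matrix.self_mul_conjTranspose_eq_zero] at hX
    calc T * h * σ = T * h * (r * r) := by rw [hrr]
      _ = (T * h * r) * r := by simp only [Matrix.mul_assoc]
      _ = 0 := by rw [hX0, Matrix.zero_mul]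
  have stepA' : T * h * S = 0 := hsupp _ stepA
  have hhS : h * S = S * h * S := by
    have : (1 - S) * h * S = h * S - S * h * S := by
      rw [Matrix.sub_mul, Matrix.sub_mul, Matrix.one_mul]
    rw [hT] at stepA'
    rw [this] at stepA'
    exact sub_eq_zero.mp stepA'
  have stepB : T * (hᴴ * h) * S = 0 := by
    have hB : T * (h * σ * hᴴ) = (1 / 2 : ℂ) • (T * (hᴴ * h) * σ) := by
      rw [hst, Matrix.mul_smul, Matrix.mul_add]
      have e1 : T * (hᴴ * h * σ) = T * (hᴴ * h) * σ := by simp only [Matrix.mul_assoc]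
      have e2 : T * (σ * (hᴴ * h)) = 0 := by
        rw [← Matrix.mul_assoc, hTσ, Matrix.zero_mul]
      rw [e1, e2, add_zero]
    have hL : T * (h * σ * hᴴ) = 0 := by
      calc T * (h * σ * hᴴ) = (T * h * σ) * hᴴ := by simp only [Matrix.mul_assoc]
        _ = 0 := by rw [stepA, Matrix.zero_mul]
    rw [hL] at hB
    have : T * (hᴴ * h) * σ = 0 := by
      have := hB.symm
      rwa [smul_eq_zero_iff_right (by norm_num : (1/2 : ℂ) ≠ 0)] at this
    exact hsupp _ this
  set g : Matrix (Fin n) (Fin n) ℂ := h * S + T with hg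
  have hTT : T * T = T := by
    simp only [hT, Matrix.sub_mul, Matrix.mul_sub, Matrix.one_mul, Matrix.mul_one, hS2]
    abel
  have hTS : T * S = 0 := by
    rw [hT, Matrix.sub_mul, Matrix.one_mul, hS2, sub_self]
  have hST : S * T = 0 := by
    rw [hT, Matrix.mul_sub, Matrix.mul_one, hS2, sub_self]
  have hTg : T * g = T := by
    rw [hg, Matrix.mul_add, hTT, ← Matrix.mul_assoc, stepA', zero_add]
  have hgS : g * S = h * S := by
    rw [hg, Matrix.add_mul, Matrix.mul_assoc, hS2, hTS, add_zero]
  have hSg : S * g = h * S := by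
    rw [hg, Matrix.mul_add, hST, add_zero, ← Matrix.mul_assoc, ← hhS]
  have hgdet : IsUnit g.det := by
    rw [isUnit_iff_ne_zero]
    intro hdet0
    obtain ⟨v, hv, hgv⟩ := (Matrix.exists_mulVec_eq_zero_iff).mpr hdet0
    have hTv : T *ᵥ v = 0 := by
      calc T *ᵥ v = (T * g) *ᵥ v := by rw [hTg]
        _ = T *ᵥ (g *ᵥ v) := by rw [Matrix.mulVec_mulVec]
        _ = 0 := by rw [hgv, Matrix.mulVec_zero]
    have hSv : S *ᵥ v = v := by
      have h1 : (1 : Matrix (Fin n) (Fin n) ℂ) *ᵥ v = v := Matrix.one_mulVec v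
      calc S *ᵥ v = (1 : Matrix (Fin n) (Fin n) ℂ) *ᵥ v - T *ᵥ v := by
            rw [hT, Matrix.sub_mulVec]; abel
        _ = v := by rw [h1, hTv, sub_zero]
    have hhv : h *ᵥ v = 0 := by
      calc h *ᵥ v = h *ᵥ (S *ᵥ v) := by rw [hSv]
        _ = (h * S) *ᵥ v := by rw [Matrix.mulVec_mulVec]
        _ = (g * S) *ᵥ v := by rw [hgS]
        _ = g *ᵥ (S *ᵥ v) := by rw [Matrix.mulVec_mulVec]
        _ = 0 := by rw [hSv, hgv]
    apply hv
    obtain ⟨hi, hhi⟩ := hinv.exists_left_inv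
    calc v = (1 : Matrix (Fin n) (Fin n) ℂ) *ᵥ v := (Matrix.one_mulVec v).symm
      _ = (hi * h) *ᵥ v := by rw [hhi]
      _ = hi *ᵥ (h *ᵥ v) := by rw [Matrix.mulVec_mulVec]
      _ = 0 := by rw [hhv, Matrix.mulVec_zero]
  have hggi : g * g⁻¹ = 1 := Matrix.mul_nonsing_inv g hgdet
  have hgig : g⁻¹ * g = 1 := Matrix.nonsing_inv_mul g hgdet
  have hSgcomm : S * g = g * S := by rw [hSg, hgS]
  have hSgi : g⁻¹ * S = S * g⁻¹ := by
    calc g⁻¹ * S = g⁻¹ * S * (g * g⁻¹) := by rw [hggi, Matrix.mul_one]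
      _ = g⁻¹ * (S * g) * g⁻¹ := by simp only [Matrix.mul_assoc]
      _ = g⁻¹ * (g * S) * g⁻¹ := by rw [hSgcomm]
      _ = (g⁻¹ * g) * (S * g⁻¹) := by simp only [Matrix.mul_assoc]
      _ = S * g⁻¹ := by rw [hgig, Matrix.one_mul]
  have stepC : T * hᴴ * S = 0 := by
    have e1 : T * hᴴ * (g * S) = 0 := by
      calc T * hᴴ * (g * S) = T * hᴴ * (h * S) := by rw [hgS]
        _ = T * (hᴴ * h) * S := by simp only [Matrix.mul_assoc]
        _ = 0 := stepB
    have e3 : T * hᴴ * (g * S) * g⁻¹ = T * hᴴ * S := by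
      calc T * hᴴ * (g * S) * g⁻¹ = T * hᴴ * (g * (S * g⁻¹)) := by
            simp only [Matrix.mul_assoc]
        _ = T * hᴴ * (g * (g⁻¹ * S)) := by rw [← hSgi]
        _ = T * hᴴ * (g * g⁻¹ * S) := by simp only [Matrix.mul_assoc]
        _ = T * hᴴ * S := by rw [hggi, Matrix.one_mul]
    rw [← e3, e1, Matrix.zero_mul]
  have hSh : S * h = h * S := by
    have hShT : S * h * T = 0 := by
      have e4 : (S * h * T)ᴴ = T * hᴴ * S := by
        rw [conjTranspose_mul, conjTranspose_mul, ← hS1]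
        have hTh : Tᴴ = T := by rw [hT, conjTranspose_sub, conjTranspose_one, ← hS1]
        rw [hTh, Matrix.mul_assoc]
      have h0 : (S * h * T)ᴴ = 0 := by rw [e4, stepC]
      calc S * h * T = ((S * h * T)ᴴ)ᴴ := (conjTranspose_conjTranspose _).symm
        _ = 0 := by rw [h0, conjTranspose_zero]
    have e5 : S * h = S * h * S + S * h * T := by
      rw [hT, Matrix.mul_sub, Matrix.mul_one]
      abel
    rw [e5, hShT, add_zero, ← hhS]
  exact ⟨S, hS1, hS2, hSh, hσS, hSσ, hSone⟩

lemma one_add_small_psd (C : Matrix (Fin n) (Fin n) ℂ) (hC : C.IsHermitian) :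
    ∃ ε : ℝ, 0 < ε ∧ (1 + (ε:ℂ) • C).PosSemidef := by
  classical
  set B : ℝ := ∑ i, ∑ j, ‖C i j‖ with hB
  have hB0 : 0 ≤ B :=
    Finset.sum_nonneg fun i _ => Finset.sum_nonneg fun j _ => (norm_nonneg _)
  refine ⟨1 / (B + 1), by positivity, posSemidef_iff_dotProduct_mulVec.mpr ⟨?_, ?_⟩⟩
  · unfold Matrix.IsHermitian
    rw [conjTranspose_add, conjTranspose_one, conjTranspose_smul, hC.eq]
    congr 1
    rw [Complex.star_def, Complex.conj_ofReal]
  · intro v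
    set N : ℝ := ∑ i, Complex.normSq (v i) with hN
    have hN0 : 0 ≤ N := Finset.sum_nonneg fun i _ => Complex.normSq_nonneg _
    have hNi : ∀ i, Complex.normSq (v i) ≤ N := by
      intro i
      exact Finset.single_le_sum (fun j _ => Complex.normSq_nonneg (v j)) (Finset.mem_univ i)
    set z : ℂ := star v ⬝ᵥ C *ᵥ v with hz
    have hzreal : (z.re : ℂ) = z :=
      Complex.conj_eq_iff_re.mp (herm_form_real C hC v)
    have hzsum : z = ∑ i, ∑ j, star (v i) * C i j * v j := by
      simp only [hz, dotProduct, mulVec, Pi.star_apply, Finset.mul_sum, mul_assoc]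
    have habs : ‖z‖ ≤ B * N := by
      rw [hzsum]
      calc ‖∑ i, ∑ j, star (v i) * C i j * v j‖
          ≤ ∑ i, ‖∑ j, star (v i) * C i j * v j‖ :=
            norm_sum_le _ _
        _ ≤ ∑ i, ∑ j, ‖star (v i) * C i j * v j‖ :=
            Finset.sum_le_sum fun i _ => norm_sum_le _ _
        _ ≤ ∑ i, ∑ j, ‖C i j‖ * N := by
            refine Finset.sum_le_sum fun i _ => Finset.sum_le_sum fun j _ => ?_
            rw [norm_mul, norm_mul]
            have hstar : ‖star (v i)‖ = ‖v i‖ := by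
              rw [Complex.star_def, Complex.norm_conj]
            rw [hstar]
            have ha2 : ‖v i‖ ^ 2 ≤ N := by rw [Complex.sq_norm]; exact hNi i
            have hb2 : ‖v j‖ ^ 2 ≤ N := by rw [Complex.sq_norm]; exact hNi j
            have ha0 : 0 ≤ ‖v i‖ := norm_nonneg _
            have hb0 : 0 ≤ ‖v j‖ := norm_nonneg _
            have hc0 : 0 ≤ ‖C i j‖ := norm_nonneg _
            nlinarith [sq_nonneg (‖v i‖ - ‖v j‖)]
        _ = B * N := by
            rw [hB, Finset.sum_mul]
            exact Finset.sum_congr rfl fun i _ => (Finset.sum_mul _ _ _).symm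
    set ε : ℝ := 1 / (B + 1) with hε
    have hεpos : 0 < ε := by positivity
    have hvv : star v ⬝ᵥ v = (N : ℂ) := by
      rw [hN]
      push_cast
      simp only [dotProduct, Pi.star_apply, Complex.star_def]
      exact Finset.sum_congr rfl fun i _ => by
        rw [Complex.normSq_eq_conj_mul_self]
    have hform : star v ⬝ᵥ ((1 + (ε:ℂ) • C) *ᵥ v) = (N : ℂ) + (ε:ℂ) * z := by
      rw [Matrix.add_mulVec, Matrix.one_mulVec, Matrix.smul_mulVec, dotProduct_add,
        dotProduct_smul, hvv, smul_eq_mul]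
    rw [hform, ← hzreal]
    have hreal : ((N + ε * z.re : ℝ) : ℂ) = (N:ℂ) + (ε:ℂ) * (z.re:ℂ) := by push_cast; ring
    rw [← hreal]
    rw [Complex.zero_le_real]
    have h1 : -(B * N) ≤ z.re := by
      have h2 := Complex.abs_re_le_norm z
      have h3 := neg_abs_le z.re
      nlinarith
    have hεB : ε * B ≤ 1 := by
      rw [hε, div_mul_eq_mul_div, one_mul]
      rw [div_le_one (by positivity)]
      linarith
    nlinarith [mul_le_mul_of_nonneg_left h1 hεpos.le, mul_le_mul_of_nonneg_right hεB hN0]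

lemma pos_perturb (M C : Matrix (Fin n) (Fin n) ℂ) (hM : M.PosSemidef)
    (hMu : IsUnit M) (hC : C.IsHermitian) :
    ∃ ε : ℝ, 0 < ε ∧ (M + (ε:ℂ) • C).PosSemidef := by
  obtain ⟨R, hRherm, hRR⟩ : ∃ R : Matrix (Fin n) (Fin n) ℂ, Rᴴ = R ∧ R * R = M :=
    psd_sqrt_exists _ hM
  have hRdet : IsUnit R.det := by
    have h1 : IsUnit M.det := (Matrix.isUnit_iff_isUnit_det M).mp hMu
    rw [← hRR, Matrix.det_mul] at h1
    exact isUnit_of_mul_isUnit_left h1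
  have hRiR : R⁻¹ * R = 1 := Matrix.nonsing_inv_mul R hRdet
  have hRRi : R * R⁻¹ = 1 := Matrix.mul_nonsing_inv R hRdet
  have hRiherm : (R⁻¹)ᴴ = R⁻¹ := by rw [Matrix.conjTranspose_nonsing_inv, hRherm]
  set C' := R⁻¹ * C * R⁻¹ with hC'
  have hC'herm : C'.IsHermitian := by
    unfold Matrix.IsHermitian
    rw [hC', conjTranspose_mul, conjTranspose_mul, hRiherm, hC.eq, Matrix.mul_assoc]
  obtain ⟨ε, hεpos, hψ⟩ := one_add_small_psd C' hC'herm
  refine ⟨ε, hεpos, ?_⟩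
  have key : Rᴴ * (1 + (ε:ℂ) • C') * R = M + (ε:ℂ) • C := by
    rw [hRherm, Matrix.mul_add, Matrix.add_mul, Matrix.mul_one, hRR]
    congr 1
    rw [Matrix.mul_smul, Matrix.smul_mul]
    congr 1
    calc R * (R⁻¹ * C * R⁻¹) * R = (R * R⁻¹) * C * (R⁻¹ * R) := by
          simp only [Matrix.mul_assoc]
      _ = C := by rw [hRRi, hRiR, Matrix.one_mul, Matrix.mul_one]
  rw [← key]
  exact hψ.conjTranspose_mul_mul_same R

end Aux

/-- No stationary phase relations between inequivalent invertible parts. -/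
theorem stmt14 {n : ℕ} (h P : Matrix (Fin n) (Fin n) ℂ)
    (hinv : IsUnit h)
    (hP1 : P = Pᴴ) (hP2 : P * P = P) (hP0 : P ≠ 0) (hPne1 : P ≠ 1)
    (hPh : P * h = h * P)
    (honly : ∀ Q : Matrix (Fin n) (Fin n) ℂ, Q = Qᴴ → Q * Q = Q → Q * h = h * Q →
      Q = 0 ∨ Q = P ∨ Q = 1 - P ∨ Q = 1)
    (ρ : Matrix (Fin n) (Fin n) ℂ) (hρ : ρ.PosSemidef) (htr : ρ.trace = 1)
    (hstat : lindblad h ρ = 0) :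
    P * ρ * (1 - P) = 0 := by
  by_contra hY
  set Q : Matrix (Fin n) (Fin n) ℂ := 1 - P with hQdef
  have hPherm : Pᴴ = P := hP1.symm
  have hPhs : P * hᴴ = hᴴ * P := by
    have e := congrArg conjTranspose hPh
    rw [conjTranspose_mul, conjTranspose_mul, hPherm] at e
    exact e.symm
  have hQherm : Qᴴ = Q := by
    rw [hQdef, conjTranspose_sub, conjTranspose_one, hPherm]
  have hQh : Q * h = h * Q := by
    rw [hQdef, Matrix.sub_mul, Matrix.mul_sub, Matrix.one_mul, Matrix.mul_one, hPh]
  have hQhs : Q * hᴴ = hᴴ * Q := by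
    rw [hQdef, Matrix.sub_mul, Matrix.mul_sub, Matrix.one_mul, Matrix.mul_one, hPhs]
  have hPQ : P * Q = 0 := by rw [hQdef, Matrix.mul_sub, Matrix.mul_one, hP2, sub_self]
  have hQP : Q * P = 0 := by rw [hQdef, Matrix.sub_mul, Matrix.one_mul, hP2, sub_self]
  have hQ2 : Q * Q = Q := by
    simp only [hQdef, Matrix.sub_mul, Matrix.mul_sub, Matrix.one_mul, Matrix.mul_one, hP2]
    abel
  have hPplusQ : P + Q = 1 := by rw [hQdef]; abel
  have hρherm : ρᴴ = ρ := hρ.1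
  set Y : Matrix (Fin n) (Fin n) ℂ := P * ρ * Q with hYdef
  set Ys : Matrix (Fin n) (Fin n) ℂ := Q * ρ * P with hYsdef
  have hYherm : Yᴴ = Ys := by
    rw [hYdef, hYsdef, conjTranspose_mul, conjTranspose_mul, hQherm, hρherm, hPherm,
      Matrix.mul_assoc]
  set C : Matrix (Fin n) (Fin n) ℂ := Y + Ys with hCdef
  set D : Matrix (Fin n) (Fin n) ℂ := P * ρ * P + Q * ρ * Q with hDdef
  have hCherm : C.IsHermitian := by
    unfold Matrix.IsHermitian
    rw [hCdef, conjTranspose_add, hYherm, ← hYherm, conjTranspose_conjTranspose, add_comm]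
  have hDherm : D.IsHermitian := by
    unfold Matrix.IsHermitian
    have e1 : (P * ρ * P)ᴴ = P * ρ * P := by
      rw [conjTranspose_mul, conjTranspose_mul, hPherm, hρherm, Matrix.mul_assoc]
    have e2 : (Q * ρ * Q)ᴴ = Q * ρ * Q := by
      rw [conjTranspose_mul, conjTranspose_mul, hQherm, hρherm, Matrix.mul_assoc]
    rw [hDdef, conjTranspose_add, e1, e2]
  have hDpsd : D.PosSemidef := by
    have e1 : (P * ρ * Pᴴ).PosSemidef := hρ.mul_mul_conjTranspose_same P
    have e2 : (Q * ρ * Qᴴ).PosSemidef := hρ.mul_mul_conjTranspose_same Q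
    rw [hPherm] at e1
    rw [hQherm] at e2
    exact e1.add e2
  have hρdecomp : D + C = ρ := by
    have e1 : (P + Q) * ρ * (P + Q) = ρ := by
      rw [hPplusQ, Matrix.one_mul, Matrix.mul_one]
    calc D + C = (P + Q) * ρ * (P + Q) := by
          simp only [hDdef, hCdef, hYdef, hYsdef, Matrix.add_mul, Matrix.mul_add]
          abel
      _ = ρ := e1
  -- stationarity of the pieces
  have hsand : ∀ E F : Matrix (Fin n) (Fin n) ℂ, h * E = E * h → hᴴ * E = E * hᴴ →
      h * F = F * h → hᴴ * F = F * hᴴ → lindblad h (E * ρ * F) = 0 := by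
    intro E F he he' hf hf'
    rw [lindblad_sandwich h E F ρ he he' hf hf', hstat, Matrix.mul_zero, Matrix.zero_mul]
  have hlD : lindblad h D = 0 := by
    rw [hDdef, lindblad_add, hsand P P hPh.symm hPhs.symm hPh.symm hPhs.symm,
      hsand Q Q hQh.symm hQhs.symm hQh.symm hQhs.symm, add_zero]
  have hlC : lindblad h C = 0 := by
    rw [hCdef, lindblad_add, hYdef, hYsdef,
      hsand P Q hPh.symm hPhs.symm hQh.symm hQhs.symm,
      hsand Q P hQh.symm hQhs.symm hPh.symm hPhs.symm, add_zero]
  -- traces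
  have htrD : D.trace = 1 := by
    have e1 : (P * ρ * P).trace = (P * ρ).trace := by
      rw [Matrix.trace_mul_comm (P * ρ) P, ← Matrix.mul_assoc, hP2]
    have e2 : (Q * ρ * Q).trace = (Q * ρ).trace := by
      rw [Matrix.trace_mul_comm (Q * ρ) Q, ← Matrix.mul_assoc, hQ2]
    rw [hDdef, Matrix.trace_add, e1, e2, ← Matrix.trace_add, ← Matrix.add_mul, hPplusQ,
      Matrix.one_mul, htr]
  have htrC : C.trace = 0 := by
    have e1 : Y.trace = 0 := by
      rw [hYdef, Matrix.trace_mul_comm (P * ρ) Q, ← Matrix.mul_assoc, hQP,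
        Matrix.zero_mul, Matrix.trace_zero]
    have e2 : Ys.trace = 0 := by
      rw [hYsdef, Matrix.trace_mul_comm (Q * ρ) P, ← Matrix.mul_assoc, hPQ,
        Matrix.zero_mul, Matrix.trace_zero]
    rw [hCdef, Matrix.trace_add, e1, e2, add_zero]
  -- C ≠ 0
  have hPCQ : P * C * Q = Y := by
    have e1 : P * Y * Q = Y := by
      calc P * Y * Q = (P * P) * ρ * (Q * Q) := by
            rw [hYdef]; simp only [Matrix.mul_assoc]
        _ = Y := by rw [hP2, hQ2, hYdef]
    have e2 : P * Ys * Q = 0 := by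
      calc P * Ys * Q = (P * Q) * (ρ * (P * Q)) := by
            rw [hYsdef]; simp only [Matrix.mul_assoc]
        _ = 0 := by rw [hPQ, Matrix.zero_mul]
    rw [hCdef, Matrix.mul_add, Matrix.add_mul, e1, e2, add_zero]
  have hCne : C ≠ 0 := by
    intro h0
    apply hY
    rw [← hPCQ, h0, Matrix.mul_zero, Matrix.zero_mul]
  -- quadratic form bookkeeping
  have formD_real : ∀ v : Fin n → ℂ, ((star v ⬝ᵥ D *ᵥ v).re : ℂ) = star v ⬝ᵥ D *ᵥ v :=
    fun v => Complex.conj_eq_iff_re.mp (herm_form_real D hDherm v)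
  have formC_real : ∀ v : Fin n → ℂ, ((star v ⬝ᵥ C *ᵥ v).re : ℂ) = star v ⬝ᵥ C *ᵥ v :=
    fun v => Complex.conj_eq_iff_re.mp (herm_form_real C hCherm v)
  have form_eval : ∀ (t : ℝ) (v : Fin n → ℂ),
      star v ⬝ᵥ ((D + (t:ℂ) • C) *ᵥ v)
        = (((star v ⬝ᵥ D *ᵥ v).re + t * (star v ⬝ᵥ C *ᵥ v).re : ℝ) : ℂ) := by
    intro t v
    rw [Matrix.add_mulVec, dotProduct_add, Matrix.smul_mulVec, dotProduct_smul,
      smul_eq_mul]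
    push_cast
    rw [formD_real, formC_real]
  have psd_iff : ∀ t : ℝ, (D + (t:ℂ) • C).PosSemidef ↔
      ∀ v, 0 ≤ (star v ⬝ᵥ D *ᵥ v).re + t * (star v ⬝ᵥ C *ᵥ v).re := by
    intro t
    constructor
    · intro hp v
      have := hp.dotProduct_mulVec_nonneg v
      rw [form_eval] at this
      exact Complex.zero_le_real.mp this
    · intro hp
      rw [posSemidef_iff_dotProduct_mulVec]
      constructor
      · unfold Matrix.IsHermitian
        rw [conjTranspose_add, conjTranspose_smul, hDherm.eq, hCherm.eq]
        congr 1
        rw [Complex.star_def, Complex.conj_ofReal]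
      · intro v
        rw [form_eval]
        exact Complex.zero_le_real.mpr (hp v)
  -- the set of admissible scalings
  set 𝒮 : Set ℝ := {t : ℝ | 1 ≤ t ∧ (D + (t:ℂ) • C).PosSemidef} with h𝒮
  have h1mem : (1:ℝ) ∈ 𝒮 := by
    refine ⟨le_refl 1, ?_⟩
    have : ((1:ℝ):ℂ) • C = C := by norm_num
    rw [this, hρdecomp]
    exact hρ
  -- a direction where C is negative
  have hneg : ∃ v : Fin n → ℂ, (star v ⬝ᵥ C *ᵥ v).re < 0 := by
    by_contra hcon
    push_neg at hcon
    have hCpsd : C.PosSemidef := by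
      refine posSemidef_iff_dotProduct_mulVec.mpr ⟨hCherm, fun v => ?_⟩
      rw [← formC_real v]
      exact Complex.zero_le_real.mpr (hcon v)
    exact hCne (psd_trace_zero C hCpsd htrC)
  obtain ⟨v0, hv0⟩ := hneg
  have hbdd : BddAbove 𝒮 := by
    refine ⟨(star v0 ⬝ᵥ D *ᵥ v0).re / (-(star v0 ⬝ᵥ C *ᵥ v0).re), ?_⟩
    intro t ht
    have h2 := (psd_iff t).mp ht.2 v0
    rw [le_div_iff₀ (by linarith)]
    nlinarith
  set t₀ : ℝ := sSup 𝒮 with ht₀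
  have ht1 : (1:ℝ) ≤ t₀ := le_csSup hbdd h1mem
  have hstarPSD : (D + (t₀:ℂ) • C).PosSemidef := by
    rw [psd_iff]
    intro v
    rcases le_or_gt 0 (star v ⬝ᵥ C *ᵥ v).re with hb | hb
    · have ha : 0 ≤ (star v ⬝ᵥ D *ᵥ v).re := hDpsd.re_dotProduct_nonneg v
      nlinarith
    · have hub : t₀ ≤ (star v ⬝ᵥ D *ᵥ v).re / (-(star v ⬝ᵥ C *ᵥ v).re) := by
        apply csSup_le ⟨1, h1mem⟩
        intro t ht
        have h2 := (psd_iff t).mp ht.2 v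
        rw [le_div_iff₀ (by linarith)]
        nlinarith
      rw [le_div_iff₀ (by linarith)] at hub
      nlinarith
  have hstarstat : lindblad h (D + (t₀:ℂ) • C) = 0 := by
    rw [lindblad_add, lindblad_smul, hlD, hlC, smul_zero, add_zero]
  have hstartr : (D + (t₀:ℂ) • C).trace = 1 := by
    rw [Matrix.trace_add, Matrix.trace_smul, htrD, htrC, smul_zero, add_zero]
  obtain ⟨S, hS1, hS2, hSh, hσS, hSσ, hSone⟩ :=
    exists_support h (D + (t₀:ℂ) • C) hinv hstarPSD hstarstat
  -- compression identities
  have hQqC : Q * C * Q = 0 := by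
    have e1 : Q * Y * Q = 0 := by
      calc Q * Y * Q = (Q * P) * (ρ * (Q * Q)) := by
            rw [hYdef]; simp only [Matrix.mul_assoc]
        _ = 0 := by rw [hQP, Matrix.zero_mul]
    have e2 : Q * Ys * Q = 0 := by
      calc Q * Ys * Q = (Q * Q) * (ρ * (P * Q)) := by
            rw [hYsdef]; simp only [Matrix.mul_assoc]
        _ = 0 := by rw [hPQ, Matrix.mul_zero, Matrix.mul_zero]
    rw [hCdef, Matrix.mul_add, Matrix.add_mul, e1, e2, add_zero]
  have hPpC : P * C * P = 0 := by
    have e1 : P * Y * P = 0 := by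
      calc P * Y * P = (P * P) * (ρ * (Q * P)) := by
            rw [hYdef]; simp only [Matrix.mul_assoc]
        _ = 0 := by rw [hQP, Matrix.mul_zero, Matrix.mul_zero]
    have e2 : P * Ys * P = 0 := by
      calc P * Ys * P = (P * Q) * (ρ * (P * P)) := by
            rw [hYsdef]; simp only [Matrix.mul_assoc]
        _ = 0 := by rw [hPQ, Matrix.zero_mul]
    rw [hCdef, Matrix.mul_add, Matrix.add_mul, e1, e2, add_zero]
  have hQDQ : Q * D * Q = Q * ρ * Q := by
    have e1 : Q * (P * ρ * P) * Q = 0 := by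
      calc Q * (P * ρ * P) * Q = (Q * P) * (ρ * (P * Q)) := by
            simp only [Matrix.mul_assoc]
        _ = 0 := by rw [hQP, Matrix.zero_mul]
    have e2 : Q * (Q * ρ * Q) * Q = Q * ρ * Q := by
      calc Q * (Q * ρ * Q) * Q = (Q * Q) * ρ * (Q * Q) := by simp only [Matrix.mul_assoc]
        _ = Q * ρ * Q := by rw [hQ2, Matrix.mul_assoc]
    rw [hDdef, Matrix.mul_add, Matrix.add_mul, e1, e2, zero_add]
  have hPDP : P * D * P = P * ρ * P := by
    have e1 : P * (Q * ρ * Q) * P = 0 := by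
      calc P * (Q * ρ * Q) * P = (P * Q) * (ρ * (Q * P)) := by
            simp only [Matrix.mul_assoc]
        _ = 0 := by rw [hPQ, Matrix.zero_mul]
    have e2 : P * (P * ρ * P) * P = P * ρ * P := by
      calc P * (P * ρ * P) * P = (P * P) * ρ * (P * P) := by simp only [Matrix.mul_assoc]
        _ = P * ρ * P := by rw [hP2, Matrix.mul_assoc]
    rw [hDdef, Matrix.mul_add, Matrix.add_mul, e2, e1, add_zero]
  have hQσQ : Q * (D + (t₀:ℂ) • C) * Q = Q * ρ * Q := by
    rw [Matrix.mul_add, Matrix.add_mul, hQDQ, Matrix.mul_smul, Matrix.smul_mul, hQqC,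
      smul_zero, add_zero]
  have hPσP : P * (D + (t₀:ℂ) • C) * P = P * ρ * P := by
    rw [Matrix.mul_add, Matrix.add_mul, hPDP, Matrix.mul_smul, Matrix.smul_mul, hPpC,
      smul_zero, add_zero]
  rcases honly S hS1 hS2 hSh with hS0 | hSP | hSQ | hSI
  · -- S = 0 : state is zero, contradicting trace 1
    rw [hS0, Matrix.zero_mul] at hSσ
    rw [← hSσ, Matrix.trace_zero] at hstartr
    exact zero_ne_one hstartr
  · -- S = P : then Q ρ Q = 0, so ρ Q = 0, so Y = 0
    rw [hSP] at hσS
    have e1 : Q * (D + (t₀:ℂ) • C) * Q = 0 := by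
      calc Q * (D + (t₀:ℂ) • C) * Q = Q * ((D + (t₀:ℂ) • C) * P) * Q := by rw [hσS]
        _ = Q * (D + (t₀:ℂ) • C) * (P * Q) := by simp only [Matrix.mul_assoc]
        _ = 0 := by rw [hPQ, Matrix.mul_zero]
    rw [hQσQ] at e1
    have e2 : ρ * Q = 0 := compress_zero ρ Q hρ hQherm e1
    apply hY
    rw [hYdef, Matrix.mul_assoc, e2, Matrix.mul_zero]
  · -- S = 1 - P = Q : then P ρ P = 0, so ρ P = 0, so Y = 0
    rw [hSQ] at hσS
    have e1 : P * (D + (t₀:ℂ) • C) * P = 0 := by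
      calc P * (D + (t₀:ℂ) • C) * P = P * ((D + (t₀:ℂ) • C) * Q) * P := by rw [hσS]
        _ = P * (D + (t₀:ℂ) • C) * (Q * P) := by simp only [Matrix.mul_assoc]
        _ = 0 := by rw [hQP, Matrix.mul_zero]
    rw [hPσP] at e1
    have e2 : ρ * P = 0 := compress_zero ρ P hρ hPherm e1
    have e3 : P * ρ = 0 := by
      have := congrArg conjTranspose e2
      rwa [conjTranspose_mul, hPherm, hρherm, conjTranspose_zero] at this
    apply hY
    rw [hYdef, e3, Matrix.zero_mul]
  · -- S = 1 : the state is invertible, contradicting maximality of t₀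
    have hunit : IsUnit (D + (t₀:ℂ) • C) := hSone hSI
    obtain ⟨ε, hεpos, hεpsd⟩ := pos_perturb (D + (t₀:ℂ) • C) C hstarPSD hunit hCherm
    have hmem : t₀ + ε ∈ 𝒮 := by
      refine ⟨by linarith, ?_⟩
      have e1 : D + ((t₀ + ε : ℝ):ℂ) • C = (D + (t₀:ℂ) • C) + (ε:ℂ) • C := by
        push_cast
        rw [add_smul, hDdef]
        abel
      rw [e1]
      exact hεpsd
    have := le_csSup hbdd hmem
    linarith
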